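/- Every α_{1.5} topological group is Ramsey. -/

import Mathlib

open Filter Topology Set

/-- A countably infinite set converging to `x`: `x` is not in the set, and the set is
cofinitely contained in every neighborhood of `x`. -/
def ConvSeq {X : Type*} [TopologicalSpace X] (S : Set X) (x : X) : Prop :=
  S.Countable ∧ S.Infinite ∧ x ∉ S ∧ ∀ U ∈ nhds x, (S \ U).Finite

/-- A set converges to `x` in the weak sense: all but finitely many of its elements
are in every neighborhood of `x`. -/
def SetConv {X : Type*} [TopologicalSpace X] (S : Set X) (x : X) : Prop :=
  ∀ U ∈ nhds x, (S \ U).Finite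

/-- Thread an infinite subset of `J` that eventually dominates the thresholds `c`
of its earlier members. -/
lemma exists_thread (J : Set ℕ) (hJ : J.Infinite) (c : ℕ → ℕ) :
    ∃ I : Set ℕ, I ⊆ J ∧ I.Infinite ∧ ∀ n ∈ I, ∀ m ∈ I, n < m → c n ≤ m := by
  have step : ∀ b : ℕ, ∃ x ∈ J, b < x := fun b => hJ.exists_gt b
  let f : ℕ → ℕ := fun k => Nat.rec (Classical.choose (step 0))
    (fun _ ih => Classical.choose (step (max ih ((Finset.range (ih + 1)).sup c)))) k
  have hfs : ∀ k, f (k + 1) =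
      Classical.choose (step (max (f k) ((Finset.range (f k + 1)).sup c))) := fun k => rfl
  have hmem : ∀ k, f k ∈ J := by
    intro k
    cases k with
    | zero => exact (Classical.choose_spec (step 0)).1
    | succ k => rw [hfs]; exact (Classical.choose_spec (step _)).1
  have hgt : ∀ k, max (f k) ((Finset.range (f k + 1)).sup c) < f (k + 1) := by
    intro k; rw [hfs]; exact (Classical.choose_spec (step _)).2
  have hmono : StrictMono f :=
    strictMono_nat_of_lt_succ fun k => lt_of_le_of_lt (le_max_left _ _) (hgt k)
  refine ⟨Set.range f, ?_, Set.infinite_range_of_injective hmono.injective, ?_⟩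
  · rintro x ⟨k, rfl⟩; exact hmem k
  · rintro n ⟨j, rfl⟩ m ⟨k, rfl⟩ hlt
    have hjk : j < k := hmono.lt_iff_lt.1 hlt
    have h1 : c (f j) ≤ (Finset.range (f j + 1)).sup c :=
      Finset.le_sup (Finset.mem_range.2 (Nat.lt_succ_self _))
    have h2 : (Finset.range (f j + 1)).sup c < f (j + 1) :=
      lt_of_le_of_lt (le_max_right _ _) (hgt j)
    exact le_trans h1 (le_trans h2.le (hmono.monotone hjk))

/-- Extract an injective sequence converging to `x` from a sequence with infinite range. -/
lemma exists_inj_seq {X : Type*} [TopologicalSpace X] (f : ℕ → X) (x : X)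
    (hf : Tendsto f atTop (𝓝 x)) (hinf : (Set.range f).Infinite) :
    ∃ y : ℕ → X, Function.Injective y ∧ Tendsto y atTop (𝓝 x) := by
  have step : ∀ b : ℕ, ∃ m, b < m ∧ f m ∉ f '' (Set.Iic b) := by
    intro b
    by_contra h
    push_neg at h
    apply hinf
    apply ((Set.finite_Iic b).image f).subset
    rintro z ⟨m, rfl⟩
    by_cases hm : m ≤ b
    · exact ⟨m, hm, rfl⟩
    · exact h m (not_le.1 hm)
  let σ : ℕ → ℕ := fun k => Nat.rec 0 (fun _ ih => Classical.choose (step ih)) k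
  have hσs : ∀ k, σ (k + 1) = Classical.choose (step (σ k)) := fun k => rfl
  have hσlt : ∀ k, σ k < σ (k + 1) := by
    intro k; rw [hσs]; exact (Classical.choose_spec (step (σ k))).1
  have hσnew : ∀ k, f (σ (k + 1)) ∉ f '' (Set.Iic (σ k)) := by
    intro k; rw [hσs]; exact (Classical.choose_spec (step (σ k))).2
  have hσmono : StrictMono σ := strictMono_nat_of_lt_succ hσlt
  refine ⟨f ∘ σ, ?_, hf.comp hσmono.tendsto_atTop⟩
  have key : ∀ j k, j < k → f (σ k) ≠ f (σ j) := by
    intro j k hjk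
    obtain ⟨k, rfl⟩ := Nat.exists_eq_add_of_lt hjk
    intro h
    exact hσnew (j + k) (h ▸ ⟨σ j, hσmono.monotone (Nat.le_add_right j k), rfl⟩)
  intro j k h
  by_contra hne
  rcases lt_or_gt_of_ne hne with hlt | hlt
  · exact key j k hlt h.symm
  · exact key k j hlt h

section Main

variable {G : Type*} [Group G]

/-- At each stage of the recursion we can pick a fresh index. -/
lemma exists_good (g : ℕ → ℕ → G) (y : ℕ → G) (hy : Function.Injective y)
    (t : ℕ) (prev : ℕ → ℕ) :
    ∃ k, (Nat.unpair t).2 < k ∧ g (Nat.unpair t).1 (Nat.unpair t).2 * y k ≠ 1 ∧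
      ∀ s < t, g (Nat.unpair t).1 (Nat.unpair t).2 * y k ≠
        g (Nat.unpair s).1 (Nat.unpair s).2 * y (prev s) := by
  set a := g (Nat.unpair t).1 (Nat.unpair t).2 with ha
  set Bad : Set G :=
    insert 1 ((fun s => g (Nat.unpair s).1 (Nat.unpair s).2 * y (prev s)) '' Set.Iio t) with hBadDef
  have hBad : Bad.Finite := ((Set.finite_Iio t).image _).insert 1
  have hmulinj : Function.Injective (fun k => a * y k) :=
    (mul_right_injective a).comp hy
  have hpre : ((fun k => a * y k) ⁻¹' Bad).Finite :=
    Set.Finite.preimage hmulinj.injOn hBad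
  obtain ⟨k, hk⟩ := ((Set.Ioi_infinite (Nat.unpair t).2).diff hpre).nonempty
  refine ⟨k, hk.1, ?_, ?_⟩
  · intro h
    exact hk.2 (Set.mem_insert_iff.2 (Or.inl h))
  · intro s hs h
    exact hk.2 (Set.mem_insert_iff.2 (Or.inr ⟨s, hs, h.symm⟩))

/-- The recursive choice function: `FF g y hy (Nat.pair n m)` is the index `k` paired
with entry `(n, m)`. -/
noncomputable def FF (g : ℕ → ℕ → G) (y : ℕ → G) (hy : Function.Injective y) (t : ℕ) : ℕ :=
  Classical.choose
      (exists_good g y hy t (fun s => if h : s < t then FF g y hy s else 0))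
termination_by t
decreasing_by all_goals exact h

lemma FF_spec (g : ℕ → ℕ → G) (y : ℕ → G) (hy : Function.Injective y) (t : ℕ) :
    (Nat.unpair t).2 < FF g y hy t ∧
      g (Nat.unpair t).1 (Nat.unpair t).2 * y (FF g y hy t) ≠ 1 ∧
      ∀ s < t, g (Nat.unpair t).1 (Nat.unpair t).2 * y (FF g y hy t) ≠
        g (Nat.unpair s).1 (Nat.unpair s).2 * y (FF g y hy s) := by
  have h := Classical.choose_spec
    (exists_good g y hy t (fun s => if h : s < t then FF g y hy s else 0))
  rw [show FF g y hy t = Classical.choose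
      (exists_good g y hy t (fun s => if h : s < t then FF g y hy s else 0)) from by
    rw [FF]] at *
  refine ⟨h.1, h.2.1, fun s hs => ?_⟩
  have := h.2.2 s hs
  rwa [dif_pos hs] at this
end Main

/-- Every α₁.₅ topological group is Ramsey. -/
theorem alpha_one_point_five_group_is_ramsey
    {G : Type*} [Group G] [TopologicalSpace G] [IsTopologicalGroup G]
    (h15 : ∀ (x : G) (S : ℕ → Set G), Pairwise (Function.onFun Disjoint S) →
      (∀ n, ConvSeq (S n) x) →
      ∃ T, T ⊆ ⋃ n, S n ∧ ConvSeq T x ∧ {n | (S n \ T).Finite}.Infinite) :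
    ∀ g : ℕ → ℕ → G, (∀ n, Tendsto (g n) atTop (nhds (1 : G))) →
      ∃ I : Set ℕ, I.Infinite ∧
        SetConv {z | ∃ n ∈ I, ∃ m ∈ I, n < m ∧ z = g n m} (1 : G) := by
  intro g hg
  by_cases hFin : ∀ n, (Set.range (g n)).Finite
  · -- all rows have finite range: eventually all entries are in every neighborhood of 1
    have hthr : ∀ n, ∃ cn : ℕ, ∀ m, cn ≤ m → ∀ U ∈ 𝓝 (1 : G), g n m ∈ U := by
      intro n
      set A : Set G := {a ∈ Set.range (g n) | ∃ U ∈ 𝓝 (1 : G), a ∉ U} with hA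
      have hAfin : A.Finite := (hFin n).subset (Set.sep_subset _ _)
      have hev : ∀ᶠ m in atTop, ∀ a ∈ A, g n m ≠ a := by
        rw [eventually_all_finite hAfin]
        intro a ha
        obtain ⟨U, hU, haU⟩ := ha.2
        have hUm : ∀ᶠ m in atTop, g n m ∈ U := (hg n) hU
        filter_upwards [hUm] with m hm
        intro h
        exact haU (h ▸ hm)
      obtain ⟨cn, hcn⟩ := eventually_atTop.1 hev
      refine ⟨cn, fun m hm U hU => ?_⟩
      by_contra hnotU
      exact hcn m hm (g n m) ⟨Set.mem_range_self m, U, hU, hnotU⟩ rfl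
    choose c hc using hthr
    obtain ⟨I, _, hIinf, hI⟩ := exists_thread Set.univ Set.infinite_univ c
    refine ⟨I, hIinf, ?_⟩
    intro U hU
    have : {z | ∃ n ∈ I, ∃ m ∈ I, n < m ∧ z = g n m} \ U = ∅ := by
      ext x
      simp only [Set.mem_diff, Set.mem_setOf_eq, Set.mem_empty_iff_false, iff_false, not_and]
      rintro ⟨n, hn, m, hm, hnm, rfl⟩
      intro hxU
      exact hxU (hc n m (hI n hn m hm hnm) U hU)
    rw [this]
    exact Set.finite_empty
  · -- some row has infinite range: extract an injective sequence y → 1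
    push_neg at hFin
    obtain ⟨r, hr⟩ := hFin
    obtain ⟨y, hyinj, hytend⟩ := exists_inj_seq (g r) 1 (hg r) hr
    set F : ℕ → ℕ := FF g y hyinj with hF
    set zf : ℕ → ℕ → G := fun n m => g n m * y (F (Nat.pair n m)) with hzf
    have key := fun t => FF_spec g y hyinj t
    have hlt : ∀ n m, m < F (Nat.pair n m) := by
      intro n m
      have := (key (Nat.pair n m)).1
      rwa [Nat.unpair_pair] at this
    have hne1 : ∀ n m, zf n m ≠ 1 := by
      intro n m
      have := (key (Nat.pair n m)).2.1
      rwa [Nat.unpair_pair] at this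
    -- global injectivity of the code-indexed sequence
    have hzcinj : Function.Injective
        (fun t => g (Nat.unpair t).1 (Nat.unpair t).2 * y (F t)) := by
      intro s t h
      by_contra hne
      rcases lt_or_gt_of_ne hne with hlt' | hlt'
      · exact (key t).2.2 s hlt' h.symm
      · exact (key s).2.2 t hlt' h
    have hzfinj : Function.Injective (fun p : ℕ × ℕ => zf p.1 p.2) := by
      intro p q h
      have h2 : g (Nat.unpair (Nat.pair p.1 p.2)).1 (Nat.unpair (Nat.pair p.1 p.2)).2
            * y (F (Nat.pair p.1 p.2))
          = g (Nat.unpair (Nat.pair q.1 q.2)).1 (Nat.unpair (Nat.pair q.1 q.2)).2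
            * y (F (Nat.pair q.1 q.2)) := by
        rw [Nat.unpair_pair, Nat.unpair_pair]
        exact h
      have h3 := hzcinj h2
      have h4 : (p.1, p.2) = (q.1, q.2) := by
        rw [← Nat.unpair_pair p.1 p.2, ← Nat.unpair_pair q.1 q.2, h3]
      exact Prod.ext (congrArg Prod.fst h4) (congrArg Prod.snd h4)
    -- the disjoint convergent sequences
    set S : ℕ → Set G := fun n => Set.range (fun m => zf n m) with hS
    have hrowinj : ∀ n, Function.Injective (fun m => zf n m) := by
      intro n m m' h
      have := hzfinj (show (fun p : ℕ × ℕ => zf p.1 p.2) (n, m)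
        = (fun p : ℕ × ℕ => zf p.1 p.2) (n, m') from h)
      exact congrArg Prod.snd this
    have hStend : ∀ n, Tendsto (fun m => zf n m) atTop (𝓝 (1 : G)) := by
      intro n
      have h1 : Tendsto (fun m => F (Nat.pair n m)) atTop atTop :=
        tendsto_atTop_mono (fun m => (hlt n m).le) tendsto_id
      have h2 : Tendsto (fun m => y (F (Nat.pair n m))) atTop (𝓝 (1 : G)) :=
        hytend.comp h1
      have h3 := (hg n).mul h2
      rw [mul_one] at h3
      exact h3
    have htail : ∀ n (U : Set G), (∀ᶠ m in atTop, zf n m ∈ U) → (S n \ U).Finite := by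
      intro n U hUev
      obtain ⟨N, hN⟩ := eventually_atTop.1 hUev
      apply ((Set.finite_Iio N).image (fun m => zf n m)).subset
      rintro x ⟨⟨m, rfl⟩, hxU⟩
      refine ⟨m, ?_, rfl⟩
      by_contra hm
      exact hxU (hN m (not_lt.1 hm))
    have hSconv : ∀ n, ConvSeq (S n) 1 := by
      intro n
      refine ⟨Set.countable_range _, Set.infinite_range_of_injective (hrowinj n), ?_, ?_⟩
      · rintro ⟨m, hm⟩
        exact hne1 n m hm
      · intro U hU
        exact htail n U ((hStend n) hU)
    have hSdisj : Pairwise (Function.onFun Disjoint S) := by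
      intro n n' hnn'
      rw [Function.onFun, Set.disjoint_left]
      rintro x ⟨m, rfl⟩ ⟨m', hm'⟩
      have := hzfinj (show (fun p : ℕ × ℕ => zf p.1 p.2) (n', m')
        = (fun p : ℕ × ℕ => zf p.1 p.2) (n, m) from hm')
      exact hnn' (congrArg Prod.fst this).symm
    obtain ⟨T, _, hTconv, hJinf⟩ := h15 1 S hSdisj hSconv
    have hd : ∀ n, n ∈ {n | (S n \ T).Finite} → ∃ cn : ℕ, ∀ m, cn ≤ m → zf n m ∈ T := by
      intro n hn
      have hfin : ((fun m => zf n m) ⁻¹' (S n \ T)).Finite :=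
        Set.Finite.preimage (hrowinj n).injOn hn
      obtain ⟨b, hb⟩ := hfin.bddAbove
      refine ⟨b + 1, fun m hm => ?_⟩
      by_contra hmT
      have : m ∈ (fun m => zf n m) ⁻¹' (S n \ T) := ⟨⟨m, rfl⟩, hmT⟩
      exact absurd (hb this) (by omega)
    choose! c hc using hd
    obtain ⟨I, hIJ, hIinf, hI⟩ := exists_thread _ hJinf c
    refine ⟨I, hIinf, ?_⟩
    intro U hU
    obtain ⟨V, hV, W, hW, hVW⟩ : ∃ V ∈ 𝓝 (1 : G), ∃ W ∈ 𝓝 (1 : G),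
        ∀ v ∈ V, ∀ w ∈ W, v * w⁻¹ ∈ U := by
      have hcont : Tendsto (fun p : G × G => p.1 * p.2⁻¹) (𝓝 1 ×ˢ 𝓝 1) (𝓝 (1 : G)) := by
        have h1 := (continuous_fst.mul continuous_snd.inv).tendsto ((1 : G), (1 : G))
        rw [nhds_prod_eq] at h1
        simp at h1
        exact h1
      have hpre := Filter.mem_map.1 (hcont hU)
      rw [Filter.mem_prod_iff] at hpre
      obtain ⟨V, hV, W, hW, hsub⟩ := hpre
      exact ⟨V, hV, W, hW, fun v hv w hw => hsub (Set.mk_mem_prod hv hw)⟩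
    obtain ⟨N, hN⟩ := eventually_atTop.1 (hytend hW : ∀ᶠ k in atTop, y k ∈ W)
    have hTV : (T \ V).Finite := hTconv.2.2.2 V hV
    set Bad : Set (ℕ × ℕ) :=
      ((fun p : ℕ × ℕ => zf p.1 p.2) ⁻¹' (T \ V)) ∪ (Set.Iio N ×ˢ Set.Iio N) with hBad
    have hBadfin : Bad.Finite :=
      (Set.Finite.preimage hzfinj.injOn hTV).union ((Set.finite_Iio N).prod (Set.finite_Iio N))
    apply (hBadfin.image (fun p : ℕ × ℕ => g p.1 p.2)).subset
    rintro x ⟨⟨n, hn, m, hm, hnm, rfl⟩, hxU⟩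
    have hmT : zf n m ∈ T := hc n (hIJ hn) m (hI n hn m hm hnm)
    have hgnm : g n m = zf n m * (y (F (Nat.pair n m)))⁻¹ := (mul_inv_cancel_right _ _).symm
    by_cases hzV : zf n m ∈ V
    · have hyW : y (F (Nat.pair n m)) ∉ W := fun hw => hxU (by rw [hgnm]; exact hVW _ hzV _ hw)
      have hFN : F (Nat.pair n m) < N := by
        by_contra hge
        exact hyW (hN _ (not_lt.1 hge))
      have hmN : m < N := (hlt n m).trans hFN
      exact ⟨(n, m), Or.inr (Set.mk_mem_prod (hnm.trans hmN) hmN), rfl⟩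
    · exact ⟨(n, m), Or.inl ⟨hmT, hzV⟩, rfl⟩
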